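/- add(M) = min{b, cov(M)}. -/

import Mathlib

open Cardinal

/-- `add(M)`: the least cardinality of a family of meager subsets of the real line
whose union is not meager. -/
noncomputable def addMeager : Cardinal :=
  sInf {c | ∃ 𝒜 : Set (Set ℝ), (∀ A ∈ 𝒜, IsMeagre A) ∧ ¬ IsMeagre (⋃₀ 𝒜) ∧ #𝒜 = c}

/-- `cov(M)`: the least cardinality of a family of meager subsets of the real line
covering the real line. -/
noncomputable def covMeager : Cardinal :=
  sInf {c | ∃ 𝒜 : Set (Set ℝ), (∀ A ∈ 𝒜, IsMeagre A) ∧ ⋃₀ 𝒜 = Set.univ ∧ #𝒜 = c}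

/-- `𝔟`: the least cardinality of a family of functions `ω → ω` unbounded in the
eventual domination order `≤*`. -/
noncomputable def unboundingNumber : Cardinal :=
  sInf {c | ∃ F : Set (ℕ → ℕ), #F = c ∧
    ∀ g : ℕ → ℕ, ∃ f ∈ F, ¬ (∀ᶠ n in Filter.atTop, f n ≤ g n)}

namespace MT


/-- Cantor space. -/
abbrev CS := ℕ → Bool

/-- weight of the `i`-th digit of `x`. -/
noncomputable def w (x : CS) (i : ℕ) : ℝ := cond (x i) ((2:ℝ)⁻¹ ^ (i+1)) 0

lemma w_nonneg (x : CS) (i : ℕ) : 0 ≤ w x i := by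
  unfold w; cases x i <;> simp <;> positivity

lemma w_le (x : CS) (i : ℕ) : w x i ≤ (2:ℝ)⁻¹ ^ (i+1) := by
  unfold w; cases x i <;> simp <;> positivity

lemma summable_w (x : CS) : Summable (w x) := by
  apply Summable.of_nonneg_of_le (w_nonneg x) (w_le x)
  have : Summable (fun i : ℕ => (2:ℝ)⁻¹ ^ i) := summable_geometric_of_lt_one (by norm_num) (by norm_num)
  simpa [pow_succ, mul_comm] using this.mul_right 2⁻¹

/-- partial dyadic value of the first `n` digits. -/
noncomputable def val (x : CS) (n : ℕ) : ℝ := ∑ i ∈ Finset.range n, w x i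

/-- binary-expansion map to `[0,1]`. -/
noncomputable def psi (x : CS) : ℝ := ∑' i, w x i

lemma val_congr {x y : CS} {n : ℕ} (h : ∀ i < n, y i = x i) : val y n = val x n := by
  unfold val; apply Finset.sum_congr rfl
  intro i hi; unfold w; rw [h i (Finset.mem_range.1 hi)]

lemma val_succ (x : CS) (n : ℕ) : val x (n+1) = val x n + w x n := Finset.sum_range_succ _ _

lemma val_mono (x : CS) {n m : ℕ} (h : n ≤ m) : val x n ≤ val x m := by
  unfold val
  exact Finset.sum_le_sum_of_subset_of_nonneg (Finset.range_subset_range.2 h)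
    (fun i _ _ => w_nonneg x i)

lemma psi_shift (x : CS) : psi x = w x 0 + 2⁻¹ * psi (fun i => x (1 + i)) := by
  have h := Summable.tsum_eq_zero_add (summable_w x)
  rw [psi, h]
  congr 1
  have : ∀ i : ℕ, w x (i + 1) = 2⁻¹ * w (fun j => x (1 + j)) i := by
    intro i
    unfold w
    simp only
    rw [Nat.add_comm 1 i]
    cases x (i+1) <;> simp [pow_succ] <;> ring
  rw [tsum_congr this, tsum_mul_left]; rfl

lemma psi_split (x : CS) (n : ℕ) : psi x = val x n + (2:ℝ)⁻¹ ^ n * psi (fun i => x (n + i)) := by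
  induction n with
  | zero => simp [val]
  | succ n ih =>
    rw [ih, psi_shift (fun i => x (n + i)), val_succ]
    have h1 : (fun i => x (n + (1 + i))) = fun i => x ((n+1) + i) := by
      funext i; congr 1; omega
    have h2 : w (fun i => x (n + i)) 0 = cond (x n) 2⁻¹ 0 := by
      unfold w; simp
    rw [h1, h2]
    have : w x n = (2:ℝ)⁻¹ ^ n * cond (x n) 2⁻¹ 0 := by
      unfold w; cases x n <;> simp [pow_succ]
    rw [this]; ring

lemma psi_nonneg (x : CS) : 0 ≤ psi x := tsum_nonneg (w_nonneg x)

lemma psi_le_one (x : CS) : psi x ≤ 1 := by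
  have h := Summable.tsum_le_tsum (w_le x) (summable_w x)
    (by
      have : Summable (fun i : ℕ => (2:ℝ)⁻¹ ^ i) := summable_geometric_of_lt_one (by norm_num) (by norm_num)
      simpa [pow_succ, mul_comm] using this.mul_right 2⁻¹)
  refine h.trans ?_
  have : ∑' i : ℕ, (2:ℝ)⁻¹ ^ (i+1) = 2⁻¹ * ∑' i : ℕ, (2:ℝ)⁻¹ ^ i := by
    rw [← tsum_mul_left]; congr 1; funext i; rw [pow_succ]; ring
  rw [this, tsum_geometric_of_lt_one (by norm_num) (by norm_num)]
  norm_num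

lemma psi_mem (x : CS) (n : ℕ) : val x n ≤ psi x ∧ psi x ≤ val x n + (2:ℝ)⁻¹ ^ n := by
  have h := psi_split x n
  have h0 := psi_nonneg (fun i => x (n + i))
  have h1 := psi_le_one (fun i => x (n + i))
  constructor
  · nlinarith [pow_pos (by norm_num : (0:ℝ) < 2⁻¹) n]
  · nlinarith [pow_pos (by norm_num : (0:ℝ) < 2⁻¹) n]

/-- interval nesting -/
lemma val_add_pow_mono (x : CS) {n m : ℕ} (h : n ≤ m) :
    val x m + (2:ℝ)⁻¹ ^ m ≤ val x n + (2:ℝ)⁻¹ ^ n := by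
  induction m with
  | zero => simp_all
  | succ m ih =>
    rcases Nat.lt_or_ge n (m+1) with hlt | hge
    · have hnm : n ≤ m := by omega
      refine le_trans ?_ (ih hnm)
      rw [val_succ]
      have := w_le x m
      have : w x m ≤ (2:ℝ)⁻¹ ^ (m+1) := this
      have h2 : (2:ℝ)⁻¹ ^ (m+1) + (2:ℝ)⁻¹ ^ (m+1) = (2:ℝ)⁻¹ ^ m := by
        rw [pow_succ]; ring
      nlinarith
    · have : n = m+1 := by omega
      simp [this]


/-- remainders of the greedy binary expansion. -/
noncomputable def rem (r : ℝ) : ℕ → ℝ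
  | 0 => r
  | (n+1) => 2 * rem r n - (if 2⁻¹ ≤ rem r n then 1 else 0)

/-- greedy binary digits. -/
noncomputable def dig (r : ℝ) : CS := fun n => if 2⁻¹ ≤ rem r n then true else false

lemma rem_mem {r : ℝ} (h0 : 0 ≤ r) (h1 : r < 1) (n : ℕ) : 0 ≤ rem r n ∧ rem r n < 1 := by
  induction n with
  | zero => exact ⟨h0, h1⟩
  | succ n ih =>
    simp only [rem]
    split <;> constructor <;> [linarith [ih.1]; linarith [ih.2]; linarith [ih.1]; push_cast <;> linarith [ih.2]]

lemma val_dig (r : ℝ) (h0 : 0 ≤ r) (h1 : r < 1) (n : ℕ) :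
    r = val (dig r) n + (2:ℝ)⁻¹ ^ n * rem r n := by
  induction n with
  | zero => simp [val, rem]
  | succ n ih =>
    rw [val_succ]
    have hw : w (dig r) n = (2:ℝ)⁻¹ ^ (n+1) * (if 2⁻¹ ≤ rem r n then 1 else 0) := by
      unfold w dig
      split <;> simp
    rw [hw]
    simp only [rem]
    set c : ℝ := (if (2:ℝ)⁻¹ ≤ rem r n then (1:ℝ) else 0) with hc
    have h3 : (2:ℝ)⁻¹ ^ (n+1) * (2 * rem r n - c) = 2⁻¹ ^ n * rem r n - 2⁻¹ ^ (n+1) * c := by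
      rw [pow_succ]; ring
    linarith [ih, h3]

lemma psi_dig {r : ℝ} (h0 : 0 ≤ r) (h1 : r < 1) : psi (dig r) = r := by
  have key : ∀ n : ℕ, |psi (dig r) - r| ≤ (2:ℝ)⁻¹ ^ n := by
    intro n
    have e1 := psi_split (dig r) n
    have e2 := val_dig r h0 h1 n
    have g0 := psi_nonneg (fun i => dig r (n + i))
    have g1 := psi_le_one (fun i => dig r (n + i))
    have hr := rem_mem h0 h1 n
    have hp : (0:ℝ) < (2:ℝ)⁻¹ ^ n := by positivity
    rw [abs_le]
    constructor <;> nlinarith [e1, e2, g0, g1, hr.1, hr.2, hp]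
  have h2 : Filter.Tendsto (fun n : ℕ => ((2:ℝ)⁻¹) ^ n) Filter.atTop (nhds 0) :=
    tendsto_pow_atTop_nhds_zero_of_lt_one (by norm_num) (by norm_num)
  have := ge_of_tendsto h2 (Filter.Eventually.of_forall key)
  have := abs_nonneg (psi (dig r) - r)
  have : |psi (dig r) - r| = 0 := le_antisymm (by linarith) (by linarith)
  have := abs_eq_zero.1 this
  linarith

lemma psi_surj {r : ℝ} (h0 : 0 ≤ r) (h1 : r < 1) : ∃ x : CS, psi x = r :=
  ⟨dig r, psi_dig h0 h1⟩

/-- value of a spliced sequence. -/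
lemma val_splice (s : CS) (n : ℕ) (z : CS) (k : ℕ) :
    val (fun i => if i < n then s i else z (i - n)) (n + k)
      = val s n + (2:ℝ)⁻¹ ^ n * val z k := by
  induction k with
  | zero =>
    have hcg := val_congr (x := s) (y := fun i => if i < n then s i else z (i - n)) (n := n)
      (fun i hi => if_pos hi)
    rw [Nat.add_zero, hcg]
    simp [val]
  | succ k ih =>
    rw [show n + (k+1) = (n+k)+1 by omega, val_succ, ih, val_succ]
    have : w (fun i => if i < n then s i else z (i - n)) (n + k) = (2:ℝ)⁻¹ ^ n * w z k := by
      unfold w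
      have hb : (fun i => if i < n then s i else z (i - n)) (n + k) = z k := by
        show (if n + k < n then s (n+k) else z (n+k-n)) = z k
        rw [if_neg (by omega)]
        congr 1
        omega
      rw [hb]
      cases z k <;> simp [pow_add] <;> ring
    rw [this]; ring

/-- Find a dyadic subcylinder of the cylinder over `(s, n)` whose ψ-interval
is inside `(a,b)`, provided `(a,b)` sits inside the ψ-interval of `(s,n)`. -/
lemma find_subcyl (s : CS) (n : ℕ) {a b : ℝ} (ha : val s n ≤ a)
    (hb : b ≤ val s n + (2:ℝ)⁻¹ ^ n) (hab : a < b) :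
    ∃ (t : CS) (m : ℕ), n ≤ m ∧ (∀ i < n, t i = s i) ∧
      a < val t m ∧ val t m + (2:ℝ)⁻¹ ^ m < b := by
  -- choose m with 4 * 2⁻¹^m < b - a and m ≥ n
  obtain ⟨K, hK⟩ := exists_pow_lt_of_lt_one (show (0:ℝ) < (b-a)/4 by linarith)
    (show (2:ℝ)⁻¹ < 1 by norm_num)
  set m := max n K with hm
  have hmn : n ≤ m := le_max_left _ _
  have hpow : (2:ℝ)⁻¹ ^ m ≤ (2:ℝ)⁻¹ ^ K :=
    pow_le_pow_of_le_one (by norm_num) (by norm_num) (le_max_right _ _)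
  set ε := (2:ℝ)⁻¹ ^ m with hε
  have hεpos : (0:ℝ) < ε := by positivity
  have hε4 : 4 * ε < b - a := by
    have : ε < (b-a)/4 := lt_of_le_of_lt hpow hK
    linarith
  set j : ℤ := ⌈a / ε⌉ + 2 with hj
  set r : ℝ := (j : ℝ) * ε with hr
  have hceil : a / ε ≤ (⌈a / ε⌉ : ℝ) := Int.le_ceil _
  have hceil2 : (⌈a / ε⌉ : ℝ) < a / ε + 1 := Int.ceil_lt_add_one _
  have hA : a ≤ (⌈a / ε⌉ : ℝ) * ε := by
    have := mul_le_mul_of_nonneg_right hceil (le_of_lt hεpos)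
    rwa [div_mul_cancel₀ _ (ne_of_gt hεpos)] at this
  have hB : (⌈a / ε⌉ : ℝ) * ε < a + ε := by
    have := mul_lt_mul_of_pos_right hceil2 hεpos
    rw [add_mul, div_mul_cancel₀ _ (ne_of_gt hεpos), one_mul] at this
    linarith
  have hexp : r = (⌈a / ε⌉ : ℝ) * ε + 2 * ε := by rw [hr, hj]; push_cast; ring
  have hra : a + 2*ε ≤ r := by rw [hexp]; linarith
  have hrb : r + ε < b := by rw [hexp]; linarith
  -- the digit tail
  have hvn : (0:ℝ) < (2:ℝ)⁻¹ ^ n := by positivity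
  set u : ℝ := (r - val s n) * 2 ^ n with hu
  have hinv : (2:ℝ)⁻¹ ^ n * 2 ^ n = 1 := by
    rw [← mul_pow]; norm_num
  have hu0 : 0 ≤ u := by
    have : val s n ≤ r := by linarith
    have := sub_nonneg.2 this
    positivity
  have hu1 : u < 1 := by
    have h2 : r < val s n + (2:ℝ)⁻¹ ^ n := by linarith
    rw [hu]
    calc (r - val s n) * 2 ^ n < (2:ℝ)⁻¹ ^ n * 2 ^ n := by
          apply mul_lt_mul_of_pos_right _ (by positivity)
          linarith
      _ = 1 := hinv
  set t : CS := fun i => if i < n then s i else dig u (i - n) with ht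
  refine ⟨t, m, hmn, fun i hi => if_pos hi, ?_, ?_⟩
  · -- a < val t m
    have := val_splice s n (dig u) (m - n)
    rw [show n + (m - n) = m by omega] at this
    rw [ht, this]
    have hval := val_dig u hu0 hu1 (m - n)
    have hrem := rem_mem hu0 hu1 (m - n)
    -- val (dig u) (m-n) = u - 2⁻¹^(m-n) * rem
    have hvd : val (dig u) (m - n) = u - (2:ℝ)⁻¹ ^ (m-n) * rem u (m-n) := by linarith
    rw [hvd, hu]
    have hsplit : (2:ℝ)⁻¹ ^ n * ((r - val s n) * 2 ^ n) = r - val s n := by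
      rw [show (2:ℝ)⁻¹ ^ n * ((r - val s n) * 2 ^ n) = ((2:ℝ)⁻¹ ^ n * 2 ^ n) * (r - val s n) by ring, hinv]; ring
    have hpowsplit : (2:ℝ)⁻¹ ^ n * (2:ℝ)⁻¹ ^ (m - n) = ε := by
      rw [hε, ← pow_add]; congr 1; omega
    have expand : val s n + (2:ℝ)⁻¹ ^ n * ((r - val s n) * 2 ^ n - (2:ℝ)⁻¹ ^ (m-n) * rem u (m-n))
        = r - ε * rem u (m-n) := by
      rw [mul_sub, hsplit, show (2:ℝ)⁻¹ ^ n * ((2:ℝ)⁻¹ ^ (m-n) * rem u (m-n)) = ((2:ℝ)⁻¹ ^ n * (2:ℝ)⁻¹ ^ (m-n)) * rem u (m-n) by ring, hpowsplit]; ring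
    rw [expand]
    nlinarith [hrem.1, hrem.2]
  · -- val t m + ε < b
    have := val_splice s n (dig u) (m - n)
    rw [show n + (m - n) = m by omega] at this
    rw [ht, this]
    have hval := val_dig u hu0 hu1 (m - n)
    have hrem := rem_mem hu0 hu1 (m - n)
    have hvd : val (dig u) (m - n) = u - (2:ℝ)⁻¹ ^ (m-n) * rem u (m-n) := by linarith
    rw [hvd, hu]
    have hsplit : (2:ℝ)⁻¹ ^ n * ((r - val s n) * 2 ^ n) = r - val s n := by
      rw [show (2:ℝ)⁻¹ ^ n * ((r - val s n) * 2 ^ n) = ((2:ℝ)⁻¹ ^ n * 2 ^ n) * (r - val s n) by ring, hinv]; ring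
    have hpowsplit : (2:ℝ)⁻¹ ^ n * (2:ℝ)⁻¹ ^ (m - n) = ε := by
      rw [hε, ← pow_add]; congr 1; omega
    have expand : val s n + (2:ℝ)⁻¹ ^ n * ((r - val s n) * 2 ^ n - (2:ℝ)⁻¹ ^ (m-n) * rem u (m-n))
        = r - ε * rem u (m-n) := by
      rw [mul_sub, hsplit, show (2:ℝ)⁻¹ ^ n * ((2:ℝ)⁻¹ ^ (m-n) * rem u (m-n)) = ((2:ℝ)⁻¹ ^ n * (2:ℝ)⁻¹ ^ (m-n)) * rem u (m-n) by ring, hpowsplit]; ring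
    rw [expand]
    nlinarith [hrem.1, hrem.2]



/-- If `ψ y` lies strictly inside the dyadic interval of the cylinder `(t, m)`,
then `y` belongs to that cylinder. -/
lemma mem_cyl_of_psi_mem {y t : CS} {m : ℕ}
    (h1 : val t m < psi y) (h2 : psi y < val t m + (2:ℝ)⁻¹ ^ m) :
    ∀ i < m, y i = t i := by
  intro i him
  induction i using Nat.strong_induction_on with
  | _ i ih =>
    by_contra hne
    have hagree : ∀ j < i, y j = t j := fun j hj => ih j hj (lt_trans hj him)
    have hvi : val y i = val t i := val_congr hagree
    have hyi := psi_mem y (i+1)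
    have hlow : val t (i+1) ≤ val t m := val_mono t (by omega)
    have hhigh : val t m + (2:ℝ)⁻¹ ^ m ≤ val t (i+1) + (2:ℝ)⁻¹ ^ (i+1) :=
      val_add_pow_mono t (by omega)
    have hvy : val y (i+1) = val y i + w y i := val_succ y i
    have hvt : val t (i+1) = val t i + w t i := val_succ t i
    -- bits differ
    cases hy : y i <;> cases ht : t i
    · exact hne (by rw [hy, ht])
    · -- y i = false, t i = true : psi y ≤ val y (i+1) + 2⁻¹^(i+1) = val t (i+1) ≤ val t m
      have hwy : w y i = 0 := by unfold w; rw [hy]; rfl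
      have hwt : w t i = (2:ℝ)⁻¹ ^ (i+1) := by unfold w; rw [ht]; rfl
      have := hyi.2
      linarith
    · -- y i = true, t i = false : psi y ≥ val y (i+1) = val t (i+1) + 2⁻¹^(i+1)
      have hwy : w y i = (2:ℝ)⁻¹ ^ (i+1) := by unfold w; rw [hy]; rfl
      have hwt : w t i = 0 := by unfold w; rw [ht]; rfl
      have := hyi.1
      linarith
    · exact hne (by rw [hy, ht])

/-- Combinatorial "nowhere dense" predicate on Cantor space:
every cylinder has a subcylinder avoiding `D`. -/
def Avoid (D : Set CS) : Prop :=
  ∀ (s : CS) (n : ℕ), ∃ (t : CS) (m : ℕ), n ≤ m ∧ (∀ i < n, t i = s i) ∧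
    ∀ y : CS, (∀ i < m, y i = t i) → y ∉ D

lemma avoid_empty : Avoid (∅ : Set CS) := by
  intro s n; exact ⟨s, n, le_refl _, fun _ _ => rfl, fun _ _ h => h⟩

lemma avoid_mono {D D' : Set CS} (h : D' ⊆ D) (hD : Avoid D) : Avoid D' := by
  intro s n
  obtain ⟨t, m, h1, h2, h3⟩ := hD s n
  exact ⟨t, m, h1, h2, fun y hy hmem => h3 y hy (h hmem)⟩

lemma avoid_union {D D' : Set CS} (hD : Avoid D) (hD' : Avoid D') : Avoid (D ∪ D') := by
  intro s n
  obtain ⟨t1, m1, h1, h2, h3⟩ := hD s n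
  obtain ⟨t, m, g1, g2, g3⟩ := hD' t1 m1
  refine ⟨t, m, le_trans h1 g1, fun i hi => (g2 i (lt_of_lt_of_le hi h1)).trans (h2 i hi), ?_⟩
  intro y hy hmem
  rcases hmem with hmem | hmem
  · exact h3 y (fun i hi => (hy i (lt_of_lt_of_le hi g1)).trans (g2 i hi)) hmem
  · exact g3 y hy hmem

/-- Pulling back a nowhere dense subset of `ℝ` gives an avoidable set. -/
lemma avoid_preimage {E : Set ℝ} (hE : IsNowhereDense E) : Avoid (psi ⁻¹' E) := by
  intro s n
  set v := val s n with hv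
  have hεpos : (0:ℝ) < (2:ℝ)⁻¹ ^ n := by positivity
  have hne : (Set.Ioo v (v + (2:ℝ)⁻¹ ^ n)).Nonempty := by
    rw [Set.nonempty_Ioo]; linarith
  have hne2 : (Set.Ioo v (v + (2:ℝ)⁻¹ ^ n) \ closure E).Nonempty := by
    by_contra hcon
    rw [Set.not_nonempty_iff_eq_empty, Set.diff_eq_empty] at hcon
    have h2 : Set.Ioo v (v + (2:ℝ)⁻¹ ^ n) ⊆ interior (closure E) :=
      interior_maximal hcon isOpen_Ioo
    rw [hE] at h2
    obtain ⟨p, hp⟩ := hne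
    exact h2 hp
  obtain ⟨p, hpI, hpE⟩ := hne2
  have hnb : (closure E)ᶜ ∈ nhds p := (isClosed_closure.isOpen_compl).mem_nhds hpE
  obtain ⟨a, b, hpab, hab⟩ := mem_nhds_iff_exists_Ioo_subset.1 hnb
  set a' := max a v with ha'
  set b' := min b (v + (2:ℝ)⁻¹ ^ n) with hb'
  have hab' : a' < b' := by
    have := hpab.1; have := hpab.2; have := hpI.1; have := hpI.2
    simp only [ha', hb', lt_min_iff, max_lt_iff]
    constructor <;> constructor <;> linarith
  obtain ⟨t, m, hm1, hm2, hm3, hm4⟩ := find_subcyl s n (le_max_right a v)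
    (min_le_right b _) hab'
  refine ⟨t, m, hm1, hm2, fun y hy hmem => ?_⟩
  have hmemy := psi_mem y m
  have hvy : val y m = val t m := val_congr hy
  have hin : psi y ∈ Set.Ioo a b := by
    constructor
    · have : a ≤ a' := le_max_left _ _
      linarith [hmemy.1]
    · have : b' ≤ b := min_le_left _ _
      linarith [hmemy.2]
  exact (hab hin) (subset_closure hmem)

/-- Pushing forward an avoidable set gives a nowhere dense subset of `ℝ`. -/
lemma nwd_image {D : Set CS} (hD : Avoid D) : IsNowhereDense (psi '' D) := by
  rw [IsNowhereDense]
  by_contra hcon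
  obtain ⟨p, hp⟩ := Set.nonempty_iff_ne_empty.2 hcon
  obtain ⟨a, b, hpab, hab⟩ := mem_nhds_iff_exists_Ioo_subset.1
    (isOpen_interior.mem_nhds hp)
  have habcl : Set.Ioo a b ⊆ closure (psi '' D) := hab.trans interior_subset
  -- bounds: the Ioo sits inside [0,1]
  have him : ∀ r ∈ Set.Ioo a b, 0 ≤ r ∧ r ≤ 1 := by
    intro r hr
    have hrcl := habcl hr
    have hsub : closure (psi '' D) ⊆ Set.Icc 0 1 := by
      apply closure_minimal _ isClosed_Icc
      rintro _ ⟨x, _, rfl⟩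
      exact ⟨(psi_mem x 0).1.trans_eq' (by simp [val]), by
        have := (psi_mem x 0).2; simp [val] at this; linarith⟩
    exact ⟨(hsub hrcl).1, (hsub hrcl).2⟩
  have hab0 : a < b := hpab.1.trans hpab.2
  have hb0 : 0 < b := lt_of_le_of_lt (him p hpab).1 hpab.2
  have hpa1 : a < 1 := lt_of_lt_of_le hpab.1 (him p hpab).2
  have ha0 : 0 ≤ a := by
    by_contra hcon2
    push_neg at hcon2
    set r := max a (-1) / 2 with hr
    have hr1 : a < r := by
      rcases max_cases a (-1) with ⟨he, hge⟩ | ⟨he, hge⟩ <;> rw [hr, he] <;> linarith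
    have hr0 : r < 0 := by
      rcases max_cases a (-1) with ⟨he, hge⟩ | ⟨he, hge⟩ <;> rw [hr, he] <;> linarith
    have := (him r ⟨hr1, lt_trans hr0 hb0⟩).1
    linarith
  have hb1 : b ≤ 1 := by
    by_contra hcon2
    push_neg at hcon2
    set r := (min b 2 + 1) / 2 with hr
    have hm1 : 1 < min b 2 := by simp only [lt_min_iff]; exact ⟨hcon2, by norm_num⟩
    have hmb : min b 2 ≤ b := min_le_left _ _
    have hr1 : 1 < r := by rw [hr]; linarith
    have hrb : r < b := by rw [hr]; linarith
    have := (him r ⟨by linarith, hrb⟩).2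
    linarith
  -- find a subcylinder of the trivial cylinder inside (a,b)
  have hv0 : val (fun _ => false) 0 = 0 := by simp [val]
  obtain ⟨t0, m0, _, _, hc1, hc2⟩ := find_subcyl (fun _ => false) 0
    (by rw [hv0]; exact ha0) (by rw [hv0]; simpa using hb1) hab0
  obtain ⟨t, m, hm0, hmagree, havoid⟩ := hD t0 m0
  -- nested intervals
  have hvt : val t m0 = val t0 m0 := val_congr hmagree
  have hlow : val t0 m0 ≤ val t m := hvt ▸ val_mono t hm0
  have hhigh : val t m + (2:ℝ)⁻¹ ^ m ≤ val t0 m0 + (2:ℝ)⁻¹ ^ m0 := by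
    have := val_add_pow_mono t hm0
    rw [hvt] at this
    exact this
  have hεpos : (0:ℝ) < (2:ℝ)⁻¹ ^ m := by positivity
  -- the middle open interval misses psi '' D but is inside closure
  have hzI : val t m + (2:ℝ)⁻¹ ^ m / 2 ∈ Set.Ioo a b := by
    constructor
    · nlinarith
    · nlinarith
  have hzcl := habcl hzI
  have hzmem : ∃ q ∈ psi '' D, q ∈ Set.Ioo (val t m) (val t m + (2:ℝ)⁻¹ ^ m) := by
    have hop : IsOpen (Set.Ioo (val t m) (val t m + (2:ℝ)⁻¹ ^ m)) := isOpen_Ioo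
    have hzin : val t m + (2:ℝ)⁻¹ ^ m / 2 ∈ Set.Ioo (val t m) (val t m + (2:ℝ)⁻¹ ^ m) := by
      constructor
      · nlinarith
      · nlinarith
    obtain ⟨q, hq1, hq2⟩ := mem_closure_iff.1 hzcl _ hop hzin
    exact ⟨q, hq2, hq1⟩
  obtain ⟨q, ⟨y, hyD, hyq⟩, hqI⟩ := hzmem
  have := mem_cyl_of_psi_mem (t := t) (m := m) (by rw [hyq]; exact hqI.1)
    (by rw [hyq]; exact hqI.2)
  exact havoid y this hyD



lemma nwd_image_homeo {X : Type*} [TopologicalSpace X] (h : X ≃ₜ X) {E : Set X}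
    (hE : IsNowhereDense E) : IsNowhereDense (h '' E) := by
  rw [IsNowhereDense, ← h.image_closure, ← h.image_interior, hE, Set.image_empty]

lemma nwd_translate (c : ℝ) {E : Set ℝ} (hE : IsNowhereDense E) :
    IsNowhereDense ((fun u => u + c) '' E) := by
  have : (fun u => u + c) '' E = (Homeomorph.addRight c) '' E := rfl
  rw [this]
  exact nwd_image_homeo _ hE

lemma nwd_preimage_translate (c : ℝ) {E : Set ℝ} (hE : IsNowhereDense E) :
    IsNowhereDense ((fun u => u + c) ⁻¹' E) := by
  have : (fun u => u + c) ⁻¹' E = (fun u => u + (-c)) '' E := by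
    ext u
    simp only [Set.mem_preimage, Set.mem_image]
    constructor
    · intro hu; exact ⟨u + c, hu, by ring⟩
    · rintro ⟨v, hv, rfl⟩; simpa [add_assoc] using hv
  rw [this]
  exact nwd_translate _ hE

lemma meagre_iUnion_count {ι : Type*} [Countable ι] {f : ι → Set ℝ}
    (h : ∀ i, IsMeagre (f i)) : IsMeagre (⋃ i, f i) := by
  rw [IsMeagre, Set.compl_iUnion]
  exact countable_iInter_mem.2 h

lemma nwd_isMeagre {E : Set ℝ} (hE : IsNowhereDense E) : IsMeagre E := by
  rw [isMeagre_iff_countable_union_isNowhereDense]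
  exact ⟨{E}, by simpa using hE, Set.countable_singleton _, by simp⟩

lemma not_meagre_univ : ¬ IsMeagre (Set.univ : Set ℝ) := by
  intro h
  rw [IsMeagre, Set.compl_univ] at h
  have := dense_of_mem_residual h
  rw [dense_iff_closure_eq, closure_empty] at this
  exact (Set.empty_ne_univ) this

/-- meagre sets translated into countable unions of avoidable sets in Cantor space. -/
lemma meagre_to_avoid {A : Set ℝ} (hA : IsMeagre A) :
    ∃ V : ℕ → Set CS, (∀ N, Avoid (V N)) ∧ (∀ N N', N ≤ N' → V N ⊆ V N') ∧
      psi ⁻¹' A ⊆ ⋃ N, V N := by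
  rw [isMeagre_iff_countable_union_isNowhereDense] at hA
  obtain ⟨S, hS1, hS2, hS3⟩ := hA
  have hS' : (insert (∅ : Set ℝ) S).Countable := hS2.insert _
  obtain ⟨e, he⟩ := hS'.exists_eq_range (Set.insert_nonempty _ _)
  have hnwd : ∀ n, IsNowhereDense (e n) := by
    intro n
    have : e n ∈ insert (∅ : Set ℝ) S := by rw [he]; exact ⟨n, rfl⟩
    rcases this with h | h
    · rw [h]; exact isNowhereDense_empty
    · exact hS1 _ h
  refine ⟨fun N => ⋃ j ∈ Finset.range (N+1), psi ⁻¹' (e j), ?_, ?_, ?_⟩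
  · intro N
    induction N with
    | zero => simpa using avoid_preimage (hnwd 0)
    | succ N ih =>
      have heq : (⋃ j ∈ Finset.range (N+1+1), psi ⁻¹' (e j))
          = (⋃ j ∈ Finset.range (N+1), psi ⁻¹' (e j)) ∪ psi ⁻¹' (e (N+1)) := by
        rw [Finset.range_add_one]
        rw [Finset.set_biUnion_insert]
        rw [Set.union_comm]
      show Avoid (⋃ j ∈ Finset.range (N+1+1), psi ⁻¹' (e j))
      rw [heq]
      exact avoid_union ih (avoid_preimage (hnwd (N+1)))
  · intro N N' hNN'
    apply Set.iUnion₂_mono'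
    intro j hj
    exact ⟨j, Finset.mem_range.2 (by have := Finset.mem_range.1 hj; omega), le_refl _⟩
  · intro x hx
    have : psi x ∈ ⋃₀ S := hS3 hx
    obtain ⟨T, hT, hxT⟩ := this
    have : T ∈ insert (∅ : Set ℝ) S := Set.mem_insert_of_mem _ hT
    rw [he] at this
    obtain ⟨n, rfl⟩ := this
    exact Set.mem_iUnion.2 ⟨n, Set.mem_biUnion (Finset.self_mem_range_succ n) hxT⟩



/-- uniform escape bound for an avoidable set. -/
lemma avoid_bound {D : Set CS} (hD : Avoid D) (n : ℕ) :
    ∃ L, n < L ∧ ∀ v : CS, ∃ t : CS, (∀ i < n, t i = v i) ∧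
      ∀ y : CS, (∀ i < L, y i = t i) → y ∉ D := by
  have h' : ∀ u : Fin n → Bool, ∃ p : CS × ℕ, n ≤ p.2 ∧
      (∀ i (hi : i < n), p.1 i = u ⟨i, hi⟩) ∧
      ∀ y : CS, (∀ i < p.2, y i = p.1 i) → y ∉ D := by
    intro u
    obtain ⟨t, m, h1, h2, h3⟩ := hD (fun i => if hi : i < n then u ⟨i, hi⟩ else false) n
    refine ⟨(t, m), h1, fun i hi => ?_, h3⟩
    have := h2 i hi
    simp only [hi, dif_pos] at this
    exact this
  choose P hP1 hP2 hP3 using h'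
  set L := (Finset.univ.sup fun u : Fin n → Bool => (P u).2) + n + 1 with hL
  refine ⟨L, by omega, ?_⟩
  intro v
  set u : Fin n → Bool := fun i => v i with hu
  refine ⟨(P u).1, fun i hi => (hP2 u i hi).trans rfl, ?_⟩
  intro y hy
  apply hP3 u
  intro i hi
  apply hy
  have hsup : (P u).2 ≤ Finset.univ.sup fun u : Fin n → Bool => (P u).2 :=
    Finset.le_sup (f := fun u : Fin n → Bool => (P u).2) (Finset.mem_univ u)
  omega

/-- limits of coherent chains of prefixes. -/
lemma chain_limit (T : ℕ → CS) (lam : ℕ → ℕ) (hmono : ∀ j, lam j < lam (j+1))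
    (hcoh : ∀ j, ∀ i < lam j, T (j+1) i = T j i) :
    ∃ x : CS, ∀ j, ∀ i < lam j, x i = T j i := by
  have hsm : StrictMono lam := strictMono_nat_of_lt_succ hmono
  have hle : ∀ j, j ≤ lam j := fun j => hsm.le_apply
  have coh' : ∀ j j', j ≤ j' → ∀ i < lam j, T j' i = T j i := by
    intro j j' hjj'
    induction j' , hjj' using Nat.le_induction with
    | base => intro i _; rfl
    | succ j' hjj' ih =>
      intro i hi
      rw [hcoh j' i (lt_of_lt_of_le hi (hsm.le_iff_le.2 hjj')), ih i hi]
  refine ⟨fun i => T (i+1) i, ?_⟩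
  intro j i hi
  rcases le_or_gt j (i+1) with h | h
  · exact coh' j (i+1) h i hi
  · exact (coh' (i+1) j (le_of_lt h) i (lt_of_lt_of_le (Nat.lt_succ_self i) (hle (i+1)))).symm

/-- every member of the unbounding family set is uncountable, etc. -/
lemma unbounded_witness : unboundingNumber ∈ {c | ∃ F : Set (ℕ → ℕ), #F = c ∧
    ∀ g : ℕ → ℕ, ∃ f ∈ F, ¬ (∀ᶠ n in Filter.atTop, f n ≤ g n)} := by
  apply csInf_mem
  refine ⟨#(Set.univ : Set (ℕ → ℕ)), Set.univ, rfl, ?_⟩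
  intro g
  refine ⟨fun n => g n + 1, Set.mem_univ _, ?_⟩
  intro h
  rw [Filter.eventually_atTop] at h
  obtain ⟨N, hN⟩ := h
  have := hN N (le_refl N)
  simp at this

lemma singleton_family_covers : (fun r : ℝ => ({r} : Set ℝ)) '' Set.univ ∈
    {𝒜 : Set (Set ℝ) | (∀ A ∈ 𝒜, IsMeagre A) ∧ ⋃₀ 𝒜 = Set.univ} := by
  constructor
  · rintro A ⟨r, _, rfl⟩
    have : IsNowhereDense ({r} : Set ℝ) := by
      rw [IsNowhereDense, closure_singleton, interior_singleton]
    rw [isMeagre_iff_countable_union_isNowhereDense]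
    exact ⟨{({r} : Set ℝ)}, by simpa using this, Set.countable_singleton _, by simp⟩
  · ext r
    simp only [Set.mem_sUnion, Set.mem_univ, iff_true]
    exact ⟨{r}, ⟨r, Set.mem_univ _, rfl⟩, rfl⟩

lemma cov_witness : covMeager ∈ {c | ∃ 𝒜 : Set (Set ℝ),
    (∀ A ∈ 𝒜, IsMeagre A) ∧ ⋃₀ 𝒜 = Set.univ ∧ #𝒜 = c} := by
  apply csInf_mem
  obtain ⟨h1, h2⟩ := singleton_family_covers
  exact ⟨_, _, h1, h2, rfl⟩

lemma add_witness : addMeager ∈ {c | ∃ 𝒜 : Set (Set ℝ),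
    (∀ A ∈ 𝒜, IsMeagre A) ∧ ¬ IsMeagre (⋃₀ 𝒜) ∧ #𝒜 = c} := by
  apply csInf_mem
  obtain ⟨h1, h2⟩ := singleton_family_covers
  exact ⟨_, _, h1, by rw [h2]; exact not_meagre_univ, rfl⟩

lemma aleph0_lt_cov : ℵ₀ < covMeager := by
  obtain ⟨𝒜, h1, h2, h3⟩ := cov_witness
  rw [← h3, lt_iff_not_ge]
  intro hle
  have hcnt : 𝒜.Countable := le_aleph0_iff_set_countable.1 hle
  have : IsMeagre (⋃₀ 𝒜) := by
    rw [Set.sUnion_eq_iUnion]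
    have : Countable ↥𝒜 := hcnt.to_subtype
    exact meagre_iUnion_count (fun A => h1 A.1 A.2)
  rw [h2] at this
  exact not_meagre_univ this

lemma aleph0_lt_unbounding : ℵ₀ < unboundingNumber := by
  obtain ⟨F, h3, hF⟩ := unbounded_witness
  rw [← h3, lt_iff_not_ge]
  intro hle
  have hcnt : F.Countable := le_aleph0_iff_set_countable.1 hle
  have hne : F.Nonempty := by
    obtain ⟨f, hf, _⟩ := hF 0
    exact ⟨f, hf⟩
  obtain ⟨e, he⟩ := hcnt.exists_eq_range hne
  set g : ℕ → ℕ := fun k => (Finset.range (k+1)).sup (fun n => e n k) with hg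
  obtain ⟨f, hfF, hfg⟩ := hF g
  apply hfg
  rw [he] at hfF
  obtain ⟨n, rfl⟩ := hfF
  rw [Filter.eventually_atTop]
  refine ⟨n, fun k hk => ?_⟩
  rw [hg]
  exact Finset.le_sup (f := fun m => e m k) (Finset.mem_range.2 (by omega))

/-- boundedness extraction from `#ι < 𝔟`. -/
lemma bounded_of_lt_unbounding {ι : Type} (hι : #ι < unboundingNumber)
    (φ : ι → ℕ → ℕ) : ∃ g : ℕ → ℕ, ∀ i, ∀ᶠ n in Filter.atTop, φ i n ≤ g n := by
  by_contra hcon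
  push_neg at hcon
  have hmem : unboundingNumber ≤ #(Set.range φ) := by
    apply csInf_le'
    refine ⟨Set.range φ, rfl, ?_⟩
    intro g
    obtain ⟨i, hi⟩ := hcon g
    exact ⟨φ i, ⟨i, rfl⟩, Filter.not_eventually.2 (hi.mono fun n hn => not_le.2 hn)⟩
  have := hmem.trans mk_range_le
  exact absurd (lt_of_le_of_lt this hι) (lt_irrefl _)



lemma mk_prod_count_lt {ι κ : Type} [Countable κ] {X : Cardinal} (h1 : #ι < X)
    (h2 : ℵ₀ < X) : #(ι × κ) < X := by
  have e1 : #(ι × κ) = #ι * #κ := by simp [Cardinal.mk_prod]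
  have e2 : #κ ≤ ℵ₀ := Cardinal.mk_le_aleph0
  calc #(ι × κ) = #ι * #κ := e1
    _ ≤ #ι * ℵ₀ := mul_le_mul_right e2 _
    _ ≤ max (max #ι ℵ₀) ℵ₀ := Cardinal.mul_le_max _ _
    _ < X := by
        rw [max_lt_iff, max_lt_iff]
        exact ⟨⟨h1, h2⟩, h2⟩

section IE
variable (T : ℕ → Type) [∀ n, Fintype (T n)] [∀ n, Nonempty (T n)]

/-- block start positions -/
def beta : ℕ → ℕ
  | 0 => 0
  | (n+1) => beta n + Fintype.card (T (n : ℕ))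

lemma beta_lt (n : ℕ) : beta T n < beta T (n+1) := by
  have : 0 < Fintype.card (T n) := Fintype.card_pos
  show beta T n < beta T n + Fintype.card (T n)
  omega

lemma beta_le_self (n : ℕ) : n ≤ beta T n :=
  (strictMono_nat_of_lt_succ (beta_lt T)).le_apply

/-- selection of a coordinate from a bit pattern. -/
noncomputable def sel (c : ℕ) (hc : 0 < c) (v : Fin c → Bool) : Fin c :=
  if h : ∃ i, v i then
    Finset.min' (Finset.univ.filter fun i => v i)
      (by obtain ⟨i, hi⟩ := h; exact ⟨i, by simp [hi]⟩)
  else ⟨0, hc⟩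

lemma sel_spec (c : ℕ) (hc : 0 < c) (k : Fin c) :
    sel c hc (fun i => decide (i = k)) = k := by
  unfold sel
  rw [dif_pos ⟨k, by simp⟩]
  apply le_antisymm
  · apply Finset.min'_le
    simp
  · apply Finset.le_min'
    intro i hi
    simp only [Finset.mem_filter] at hi
    have : i = k := by simpa using hi.2
    exact le_of_eq this.symm

/-- decode an element of the product from Cantor space. -/
noncomputable def dec (x : CS) (n : ℕ) : T n :=
  (Fintype.equivFin (T n)).symm
    (sel (Fintype.card (T n)) Fintype.card_pos (fun i => x (beta T n + (i : ℕ))))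

lemma dec_force (n : ℕ) (t : T n) : ∃ v : Fin (Fintype.card (T n)) → Bool,
    ∀ x : CS, (∀ i : Fin (Fintype.card (T n)), x (beta T n + (i : ℕ)) = v i) → dec T x n = t := by
  refine ⟨fun i => decide (i = Fintype.equivFin (T n) t), fun x hx => ?_⟩
  unfold dec
  have : (fun i : Fin (Fintype.card (T n)) => x (beta T n + (i : ℕ))) = fun i => decide (i = Fintype.equivFin (T n) t) := by
    funext i; exact hx i
  rw [this, sel_spec]
  simp

end IE

/-- infinitely-equal extraction from smallness below `cov(M)`. -/
lemma ie_of_lt_cov {ι : Type} (hι : #ι < covMeager) (T : ℕ → Type) [∀ n, Fintype (T n)]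
    [∀ n, Nonempty (T n)] (φ : ι → ∀ n, T n) :
    ∃ g : ∀ n, T n, ∀ i N, ∃ m, N ≤ m ∧ g m = φ i m := by
  by_contra hcon
  push_neg at hcon
  -- conclusion shape: ∀ g, ∃ i N, ∀ m, N ≤ m → g m ≠ φ i m
  set W : ι → ℕ → Set CS := fun i N => {x | ∀ m, N ≤ m → dec T x m ≠ φ i m} with hW
  have hWavoid : ∀ i N, Avoid (W i N) := by
    intro i N s nn
    set m := max N nn with hm
    obtain ⟨v, hv⟩ := dec_force T m (φ i m)
    set t : CS := fun j => if j < beta T m then s j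
      else (if h : j - beta T m < Fintype.card (T m) then v ⟨j - beta T m, h⟩ else false) with ht
    have hβnn : nn ≤ beta T m := le_trans (le_max_right _ _) (beta_le_self T m)
    refine ⟨t, beta T m + Fintype.card (T m), le_trans hβnn (Nat.le_add_right _ _), ?_, ?_⟩
    · intro i' hi'
      rw [ht]
      simp only
      rw [if_pos (by omega)]
    · intro y hy hymem
      have : dec T y m = φ i m := by
        apply hv
        intro i'
        have hilt := i'.isLt
        have hi' : (beta T m + (i' : ℕ) : ℕ) < beta T m + Fintype.card (T m) := by omega
        rw [hy _ hi', ht]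
        simp only
        rw [if_neg (by omega)]
        have h2 : (beta T m + (i' : ℕ) : ℕ) - beta T m < Fintype.card (T m) := by omega
        rw [dif_pos h2]
        apply congrArg
        apply Fin.ext
        simp
      exact (hymem m (le_max_left _ _)) this
  -- build the covering family
  set 𝒞 : Set (Set ℝ) := Set.range (fun p : ι × (ℤ × ℕ) =>
    (fun u => u + ((p.2.1 : ℤ) : ℝ)) '' (psi '' (W p.1 p.2.2))) with h𝒞
  have hmeagre : ∀ A ∈ 𝒞, IsMeagre A := by
    rintro A ⟨⟨i, k, N⟩, rfl⟩
    exact nwd_isMeagre (nwd_translate _ (nwd_image (hWavoid i N)))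
  have hcover : ⋃₀ 𝒞 = Set.univ := by
    rw [Set.eq_univ_iff_forall]
    intro r
    have hfr0 : 0 ≤ r - ⌊r⌋ := by linarith [Int.floor_le r]
    have hfr1 : r - ⌊r⌋ < 1 := by linarith [Int.lt_floor_add_one r]
    obtain ⟨x, hx⟩ := psi_surj hfr0 hfr1
    obtain ⟨i, N, hiN⟩ := hcon (dec T x)
    refine ⟨(fun u => u + ((⌊r⌋ : ℤ) : ℝ)) '' (psi '' (W i N)), ⟨(i, (⌊r⌋, N)), rfl⟩, ?_⟩
    exact ⟨psi x, ⟨x, hiN, rfl⟩, by rw [hx]; ring⟩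
  have hle : covMeager ≤ #𝒞 := csInf_le' ⟨𝒞, hmeagre, hcover, rfl⟩
  have hlt : #𝒞 < covMeager := by
    refine lt_of_le_of_lt mk_range_le ?_
    exact mk_prod_count_lt hι aleph0_lt_cov
  exact absurd (lt_of_le_of_lt hle hlt) (lt_irrefl _)



/-- monotone majorant -/
def fup (f : ℕ → ℕ) (n : ℕ) : ℕ := (Finset.range (n+1)).sup f

lemma le_fup (f : ℕ → ℕ) {k n : ℕ} (h : k ≤ n) : f k ≤ fup f n :=
  Finset.le_sup (Finset.mem_range.2 (by omega))

/-- the slow-set associated to `f`: below every `n` there is a `true` within the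
window `[n, n + fup f n]`. -/
def Kset (f : ℕ → ℕ) : Set CS :=
  {x | ∀ n : ℕ, ∃ i, n ≤ i ∧ i ≤ n + fup f n ∧ x i = true}

lemma avoid_Kset (f : ℕ → ℕ) : Avoid (Kset f) := by
  intro s nn
  refine ⟨fun i => if i < nn then s i else false, nn + fup f nn + 1, by omega,
    fun i hi => if_pos hi, ?_⟩
  intro y hy hmem
  obtain ⟨i, hi1, hi2, hi3⟩ := hmem nn
  have h2 : y i = if i < nn then s i else false := hy i (by omega)
  rw [if_neg (by omega)] at h2
  rw [h2] at hi3
  exact Bool.false_ne_true hi3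

/-- Core lemma for `add(M) ≤ 𝔟`. -/
lemma Bcore (F : Set (ℕ → ℕ))
    (hF : ∀ g : ℕ → ℕ, ∃ f ∈ F, ¬ (∀ᶠ n in Filter.atTop, f n ≤ g n))
    (D : ℕ → Set CS) (hD : ∀ j, Avoid (D j)) :
    ∃ f ∈ F, ∃ x : CS, x ∈ Kset f ∧ ∀ j, x ∉ D j := by
  -- escape bounds
  have h1 : ∀ j n, ∃ L, n < L ∧ ∀ v : CS, ∃ t : CS, (∀ i < n, t i = v i) ∧
      ∀ y : CS, (∀ i < L, y i = t i) → y ∉ D j := fun j n => avoid_bound (hD j) n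
  choose Gb hGb1 hGb2 using h1
  choose esc hesc1 hesc2 using hGb2
  set gh : ℕ → ℕ := fun k => (Finset.range (k+1)).sup (fun j => Gb j k) with hgh
  obtain ⟨f, hfF, hfg⟩ := hF gh
  have hfreq : ∀ N, ∃ n, N ≤ n ∧ gh n < f n := by
    intro N
    have := Filter.not_eventually.1 hfg
    obtain ⟨n, hn1, hn2⟩ := Filter.frequently_atTop.1 this N
    exact ⟨n, hn1, by omega⟩
  refine ⟨f, hfF, ?_⟩
  -- stage step
  have hstep : ∀ (j : ℕ) (p : CS × ℕ), ∃ q : CS × ℕ,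
      p.2 < q.2 ∧ (∀ i < p.2, q.1 i = p.1 i) ∧
      (∀ y : CS, (∀ i < q.2, y i = q.1 i) → y ∉ D j) ∧
      (∀ n, p.2 ≤ n → n < q.2 → ∃ i, n ≤ i ∧ i ≤ n + fup f n ∧ q.1 i = true ∧ i < q.2) := by
    intro j p
    obtain ⟨kj, hkj1, hkj2⟩ := hfreq (max p.2 j)
    set s' : CS := fun i => if i < p.2 then p.1 i else true with hs'
    have hagr := hesc1 j kj s'
    have havd := hesc2 j kj s'
    set t := esc j kj s' with hte
    set L := Gb j kj with hL
    have hkL : kj < L := hGb1 j kj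
    have hjk : j ≤ kj := le_trans (le_max_right _ _) hkj1
    have hpk : p.2 ≤ kj := le_trans (le_max_left _ _) hkj1
    have hGb_le : Gb j kj ≤ gh kj := Finset.le_sup (f := fun j => Gb j kj)
      (Finset.mem_range.2 (by omega))
    refine ⟨(fun i => if i < L then t i else true, L + 1), by omega, ?_, ?_, ?_⟩
    · intro i hi
      simp only
      rw [if_pos (by omega), hagr i (by omega), hs']
      simp only
      rw [if_pos hi]
    · intro y hy
      apply havd
      intro i hi
      have := hy i (by omega)
      simpa only [if_pos hi] using this
    · intro n hn1 hn2
      rcases Nat.lt_or_ge n kj with hcase | hcase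
      · refine ⟨n, le_refl _, by omega, ?_, by omega⟩
        simp only
        rw [if_pos (by omega), hagr n (by omega), hs']
        simp only
        rw [if_neg (by omega)]
      · refine ⟨L, by omega, ?_, ?_, by omega⟩
        · have hfk : f kj ≤ fup f n := le_fup f hcase
          omega
        · simp only
          rw [if_neg (by omega)]
  -- build the sequence of stages
  set seq : ℕ → CS × ℕ := fun j =>
    Nat.rec ((fun _ => true, 0) : CS × ℕ) (fun j ih => Classical.choose (hstep j ih)) j
    with hseqdef
  have hspec : ∀ j, (seq j).2 < (seq (j+1)).2 ∧
      (∀ i < (seq j).2, (seq (j+1)).1 i = (seq j).1 i) ∧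
      (∀ y : CS, (∀ i < (seq (j+1)).2, y i = (seq (j+1)).1 i) → y ∉ D j) ∧
      (∀ n, (seq j).2 ≤ n → n < (seq (j+1)).2 →
        ∃ i, n ≤ i ∧ i ≤ n + fup f n ∧ (seq (j+1)).1 i = true ∧ i < (seq (j+1)).2) := by
    intro j
    exact Classical.choose_spec (hstep j (seq j))
  obtain ⟨x, hx⟩ := chain_limit (fun j => (seq j).1) (fun j => (seq j).2)
    (fun j => (hspec j).1) (fun j => (hspec j).2.1)
  refine ⟨x, ?_, ?_⟩
  · -- x ∈ Kset f
    intro n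
    -- find the stage containing n
    have hstage : ∀ n : ℕ, ∃ j, (seq j).2 ≤ n ∧ n < (seq (j+1)).2 := by
      intro n
      induction n with
      | zero => exact ⟨0, by simp [hseqdef], by
          have := (hspec 0).1; simpa [hseqdef] using this⟩
      | succ n ih =>
        obtain ⟨j, hj1, hj2⟩ := ih
        rcases Nat.lt_or_ge (n+1) ((seq (j+1)).2) with h | h
        · exact ⟨j, by omega, h⟩
        · exact ⟨j+1, by omega, by have := (hspec (j+1)).1; omega⟩
    obtain ⟨j, hj1, hj2⟩ := hstage n
    obtain ⟨i, hi1, hi2, hi3, hi4⟩ := (hspec j).2.2.2 n hj1 hj2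
    refine ⟨i, hi1, hi2, ?_⟩
    rw [hx (j+1) i hi4, hi3]
  · intro j
    exact (hspec j).2.2.1 x (fun i hi => hx (j+1) i hi)

lemma add_le_unbounding : addMeager ≤ unboundingNumber := by
  obtain ⟨F, hFcard, hFunb⟩ := unbounded_witness
  set 𝒜 : Set (Set ℝ) := (fun f => psi '' (Kset f)) '' F with h𝒜
  have hmeagre : ∀ A ∈ 𝒜, IsMeagre A := by
    rintro A ⟨f, _, rfl⟩
    exact nwd_isMeagre (nwd_image (avoid_Kset f))
  have hnot : ¬ IsMeagre (⋃₀ 𝒜) := by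
    intro hM
    obtain ⟨V, hV1, _, hV3⟩ := meagre_to_avoid hM
    obtain ⟨f, hfF, x, hxK, hxD⟩ := Bcore F hFunb V hV1
    have hin : x ∈ psi ⁻¹' (⋃₀ 𝒜) := by
      refine Set.mem_preimage.2 ⟨psi '' (Kset f), ⟨f, hfF, rfl⟩, ⟨x, hxK, rfl⟩⟩
    obtain ⟨_, ⟨N, rfl⟩, hN⟩ := hV3 hin
    exact hxD N hN
  have h1 : addMeager ≤ #𝒜 := csInf_le' ⟨𝒜, hmeagre, hnot, rfl⟩
  calc addMeager ≤ #𝒜 := h1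
    _ ≤ #F := Cardinal.mk_image_le
    _ = unboundingNumber := hFcard



/-- Core lemma for `min(𝔟, cov(M)) ≤ add(M)`: a family of avoidable sets indexed by a
small index type is covered by a single countable family of avoidable sets. -/
lemma Ccore {ι : Type} (V : ι → ℕ → Set CS) (hV : ∀ i N, Avoid (V i N))
    (hVmono : ∀ i, ∀ N N', N ≤ N' → V i N ⊆ V i N')
    (hB : ∀ φ : ι → ℕ → ℕ, ∃ g : ℕ → ℕ, ∀ i, ∀ᶠ k in Filter.atTop, φ i k ≤ g k)
    (hIE : ∀ (T : ℕ → Type) (_ : ∀ n, Fintype (T n)) (_ : ∀ n, Nonempty (T n))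
      (φ : ι → ∀ n, T n), ∃ g : ∀ n, T n, ∀ i N, ∃ m, N ≤ m ∧ g m = φ i m) :
    ∃ D : ℕ → Set CS, (∀ N, Avoid (D N)) ∧ ∀ i N₀, V i N₀ ⊆ ⋃ N, D N := by
  classical
  -- step 1: escape bounds
  have h1 : ∀ (i : ι) (k : ℕ), ∃ L, k < L ∧ ∀ v : CS, ∃ t : CS, (∀ a < k, t a = v a) ∧
      ∀ y : CS, (∀ a < L, y a = t a) → y ∉ V i k := fun i k => avoid_bound (hV i k) k
  choose Eb hEb1 hEb2 using h1
  choose esc hesc1 hesc2 using hEb2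
  -- step 2: dominate escape bounds
  obtain ⟨g₁, hg₁⟩ := hB (fun i k => Eb i k)
  set ell : ℕ → ℕ := fun m => Nat.rec 0 (fun _ ih => g₁ ih + ih + 1) m with hell
  have hellsucc : ∀ m, ell (m+1) = g₁ (ell m) + ell m + 1 := fun m => rfl
  have hellmono : StrictMono ell := strictMono_nat_of_lt_succ (fun m => by
    rw [hellsucc]; omega)
  have hellle : ∀ m, m ≤ ell m := fun m => hellmono.le_apply
  have hP1 : ∀ i, ∃ M, ∀ m, M ≤ m → Eb i (ell m) ≤ ell (m+1) := by
    intro i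
    obtain ⟨K, hK⟩ := Filter.eventually_atTop.1 (hg₁ i)
    refine ⟨K, fun m hm => ?_⟩
    have h2 : K ≤ ell m := le_trans hm (hellle m)
    have := hK (ell m) h2
    rw [hellsucc]
    omega
  -- step 3: the schemes
  set T : ℕ → Type := fun m => (Fin (ell m) → Bool) → (Fin (ell (m+1)) → Bool) with hT
  have hTfin : ∀ m, Fintype (T m) := fun m => by rw [hT]; infer_instance
  have hTne : ∀ m, Nonempty (T m) := fun m => by rw [hT]; infer_instance
  have hsch : ∀ (i : ι) (m : ℕ), ∃ σ : T m, Eb i (ell m) ≤ ell (m+1) →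
      ∀ y : CS, (∀ a (ha : a < ell (m+1)), ell m ≤ a →
        y a = σ (fun q : Fin (ell m) => y q) ⟨a, ha⟩) → y ∉ V i (ell m) := by
    intro i m
    refine ⟨fun v => fun a => if h : (a : ℕ) < ell m then v ⟨a, h⟩
      else esc i (ell m) (fun q => if hq : q < ell m then v ⟨q, hq⟩ else false) (a : ℕ), ?_⟩
    intro hle y hy
    set vy : Fin (ell m) → Bool := fun q => y q with hvy
    set emb : CS := fun q => if hq : q < ell m then vy ⟨q, hq⟩ else false with hemb
    apply hesc2 i (ell m) emb y
    intro a ha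
    rcases Nat.lt_or_ge a (ell m) with hcase | hcase
    · have h3 := hesc1 i (ell m) emb a hcase
      rw [h3, hemb]
      simp only
      rw [dif_pos hcase, hvy]
    · have ha2 : a < ell (m+1) := by
        have := hEb1 i (ell m); omega
      have := hy a ha2 hcase
      rw [this]
      simp only
      rw [dif_neg (by omega)]
  choose sch hsch' using hsch
  -- step 4: infinitely-equal guessing
  obtain ⟨G, hG⟩ := hIE T hTfin hTne sch
  -- step 5: second domination
  have hSne : ∀ (i : ι) (k : ℕ), {m | k ≤ m ∧ G m = sch i m ∧ Eb i (ell m) ≤ ell (m+1)}.Nonempty := by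
    intro i k
    obtain ⟨M, hM⟩ := hP1 i
    obtain ⟨m, hm1, hm2⟩ := hG i (max k M)
    exact ⟨m, le_trans (le_max_left _ _) hm1, hm2, hM m (le_trans (le_max_right _ _) hm1)⟩
  set u : ι → ℕ → ℕ := fun i k =>
    sInf {m | k ≤ m ∧ G m = sch i m ∧ Eb i (ell m) ≤ ell (m+1)} + 1 with hu
  obtain ⟨g₂, hg₂⟩ := hB u
  set hh : ℕ → ℕ := fun n => Nat.rec 0 (fun _ ih => g₂ ih + ih + 1) n with hhh
  have hhhsucc : ∀ n, hh (n+1) = g₂ (hh n) + hh n + 1 := fun n => rfl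
  have hhhmono : StrictMono hh := strictMono_nat_of_lt_succ (fun n => by
    rw [hhhsucc]; omega)
  have hhhle : ∀ n, n ≤ hh n := fun n => hhhmono.le_apply
  have hP3 : ∀ i, ∃ M₂, ∀ n, M₂ ≤ n → ∃ m, hh n ≤ m ∧ m < hh (n+1) ∧
      G m = sch i m ∧ Eb i (ell m) ≤ ell (m+1) := by
    intro i
    obtain ⟨K, hK⟩ := Filter.eventually_atTop.1 (hg₂ i)
    refine ⟨K, fun n hn => ?_⟩
    have h2 : K ≤ hh n := le_trans hn (hhhle n)
    have h3 := hK (hh n) h2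
    have h4 := Nat.sInf_mem (hSne i (hh n))
    rw [hu] at h3
    simp only at h3
    refine ⟨_, h4.1, ?_, h4.2.1, h4.2.2⟩
    rw [hhhsucc]
    omega
  -- step 6: the countable covering family
  set Fol : CS → ℕ → Prop := fun x n => ∀ m, hh n ≤ m → m < hh (n+1) →
    ∀ a (ha : a < ell (m+1)), ell m ≤ a →
      x a = G m (fun q : Fin (ell m) => x q) ⟨a, ha⟩ with hFol
  set D : ℕ → Set CS := fun N => {x | ∀ n, N ≤ n → ¬ Fol x n} with hD
  refine ⟨D, ?_, ?_⟩
  · -- each D N is avoidable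
    intro N s nn
    set n := max N nn with hn
    -- iterate the schemes across the block [hh n, hh (n+1))
    set p : ℕ → CS := fun r => Nat.rec (fun a => if a < nn then s a else false)
      (fun r ih => fun a => if a < ell (hh n + r) then ih a
        else if ha : a < ell (hh n + r + 1) then
          G (hh n + r) (fun q : Fin (ell (hh n + r)) => ih q) ⟨a, ha⟩
        else false) r with hp
    have hpsucc : ∀ r a, p (r+1) a = if a < ell (hh n + r) then p r a
        else if ha : a < ell (hh n + r + 1) then
          G (hh n + r) (fun q : Fin (ell (hh n + r)) => p r q) ⟨a, ha⟩
        else false := fun r a => rfl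
    have hc1 : ∀ r a, a < ell (hh n + r) → p (r+1) a = p r a := by
      intro r a ha
      rw [hpsucc, if_pos ha]
    have hc1' : ∀ r r', r ≤ r' → ∀ a, a < ell (hh n + r) → p r' a = p r a := by
      intro r r' hrr'
      induction r', hrr' using Nat.le_induction with
      | base => intro a _; rfl
      | succ r' hrr' ih =>
        intro a ha
        have ha' : a < ell (hh n + r') :=
          lt_of_lt_of_le ha (hellmono.monotone (show hh n + r ≤ hh n + r' by omega))
        rw [hc1 r' a ha', ih a ha]
    set R := hh (n+1) - hh n with hR
    have hR1 : 1 ≤ R := by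
      have := hhhsucc n
      omega
    have hnn_ell : nn ≤ ell (hh n) := by
      calc nn ≤ n := le_max_right _ _
        _ ≤ hh n := hhhle n
        _ ≤ ell (hh n) := hellle _
    have hle4 : ell (hh n) ≤ ell (hh n + R) :=
      hellmono.monotone (show hh n ≤ hh n + R by omega)
    refine ⟨p R, ell (hh n + R), le_trans hnn_ell hle4, ?_, ?_⟩
    · intro a ha
      have h2 : p R a = p 0 a := hc1' 0 R (by omega) a (by rw [Nat.add_zero]; omega)
      have h3 : p 0 a = if a < nn then s a else false := rfl
      rw [h2, h3, if_pos ha]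
    · intro y hy hyD
      have hFoly : Fol y n := by
        intro m hm1 hm2
        obtain ⟨r, rfl⟩ : ∃ r, m = hh n + r := ⟨m - hh n, by omega⟩
        have hrR : r + 1 ≤ R := by omega
        -- y agrees with p (r+1) below ell (hh n + r + 1)
        have hagree : ∀ a, a < ell (hh n + r + 1) → y a = p (r+1) a := by
          intro a ha
          have hle2 : ell (hh n + r + 1) ≤ ell (hh n + R) :=
            hellmono.monotone (show hh n + r + 1 ≤ hh n + R by omega)
          have h3 : a < ell (hh n + R) := lt_of_lt_of_le ha hle2
          rw [hy a h3]
          exact hc1' (r+1) R hrR a ha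
        have hrestr : (fun q : Fin (ell (hh n + r)) => y q) =
            (fun q : Fin (ell (hh n + r)) => p r q) := by
          funext q
          have hq : (q : ℕ) < ell (hh n + r) := q.isLt
          have hle3 : ell (hh n + r) ≤ ell (hh n + r + 1) :=
            hellmono.monotone (show hh n + r ≤ hh n + r + 1 by omega)
          rw [hagree q (lt_of_lt_of_le hq hle3), hc1 r q hq]
        intro a ha hge
        rw [hagree a ha, hpsucc, if_neg (by omega), dif_pos ha, hrestr]
      exact (hyD n (le_max_left _ _)) hFoly
  · -- covering
    intro i N₀ x hx
    by_contra hnot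
    rw [Set.mem_iUnion] at hnot
    push_neg at hnot
    have hnot' : ∀ N, ∃ n, N ≤ n ∧ Fol x n := by
      intro N
      have := hnot N
      rw [hD] at this
      simp only [Set.mem_setOf_eq, not_forall] at this
      obtain ⟨n, hn1, hn2⟩ := this
      exact ⟨n, hn1, not_not.1 hn2⟩
    obtain ⟨M₂, hM₂⟩ := hP3 i
    obtain ⟨n, hn1, hn2⟩ := hnot' (max M₂ N₀)
    obtain ⟨m, hm1, hm2, hm3, hm4⟩ := hM₂ n (le_trans (le_max_left _ _) hn1)
    have hxnot : x ∉ V i (ell m) := by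
      apply hsch' i m hm4 x
      intro a ha hge
      have := hn2 m hm1 hm2 a ha hge
      rw [this, hm3]
    apply hxnot
    apply hVmono i N₀ (ell m) _ hx
    calc N₀ ≤ max M₂ N₀ := le_max_right _ _
      _ ≤ n := hn1
      _ ≤ hh n := hhhle n
      _ ≤ m := hm1
      _ ≤ ell m := hellle m


lemma add_le_cov : addMeager ≤ covMeager := by
  obtain ⟨𝒞, h1, h2, h3⟩ := cov_witness
  have := csInf_le' (show #𝒞 ∈ {c | ∃ 𝒜 : Set (Set ℝ),
      (∀ A ∈ 𝒜, IsMeagre A) ∧ ¬ IsMeagre (⋃₀ 𝒜) ∧ #𝒜 = c} from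
    ⟨𝒞, h1, by rw [h2]; exact not_meagre_univ, rfl⟩)
  rw [h3] at this
  exact this

lemma min_le_add : min unboundingNumber covMeager ≤ addMeager := by
  by_contra hcon
  push_neg at hcon
  rw [lt_min_iff] at hcon
  obtain ⟨hun, hcov⟩ := hcon
  obtain ⟨𝒜, h1, h2, h3⟩ := add_witness
  -- translate each member over each integer and pull back to Cantor space
  have hpre : ∀ p : ↥𝒜 × ℤ, IsMeagre ((fun u => u + ((p.2 : ℤ) : ℝ)) ⁻¹' (p.1 : Set ℝ)) := by
    rintro ⟨A, k⟩
    exact IsMeagre.preimage_of_isOpenMap (by continuity)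
      ((Homeomorph.addRight ((k : ℤ) : ℝ)).isOpenMap) (h1 A.1 A.2)
  have hVex : ∀ p : ↥𝒜 × ℤ, ∃ V : ℕ → Set CS, (∀ N, Avoid (V N)) ∧
      (∀ N N', N ≤ N' → V N ⊆ V N') ∧
      psi ⁻¹' ((fun u => u + ((p.2 : ℤ) : ℝ)) ⁻¹' (p.1 : Set ℝ)) ⊆ ⋃ N, V N :=
    fun p => meagre_to_avoid (hpre p)
  choose W hW1 hW2 hW3 using hVex
  have hιun : #(↥𝒜 × ℤ) < unboundingNumber :=
    mk_prod_count_lt (by rw [h3]; exact hun) aleph0_lt_unbounding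
  have hιcov : #(↥𝒜 × ℤ) < covMeager :=
    mk_prod_count_lt (by rw [h3]; exact hcov) aleph0_lt_cov
  obtain ⟨D, hD1, hD2⟩ := Ccore W hW1 hW2
    (fun φ => bounded_of_lt_unbounding hιun φ)
    (fun T iF iN φ => by
      letI := iF
      letI := iN
      exact ie_of_lt_cov hιcov T φ)
  apply h2
  have hsub : ⋃₀ 𝒜 ⊆ ⋃ q : ℤ × ℕ, (fun u => u + ((q.1 : ℤ) : ℝ)) '' (psi '' (D q.2)) := by
    intro x hx
    obtain ⟨A, hA𝒜, hxA⟩ := hx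
    set k : ℤ := ⌊x⌋ with hk
    have hfr0 : 0 ≤ x - (k : ℝ) := by
      rw [hk]; linarith [Int.floor_le x]
    have hfr1 : x - (k : ℝ) < 1 := by
      rw [hk]; linarith [Int.lt_floor_add_one x]
    obtain ⟨y, hy⟩ := psi_surj hfr0 hfr1
    have hymem : y ∈ psi ⁻¹' ((fun u => u + ((k : ℤ) : ℝ)) ⁻¹' A) := by
      simp only [Set.mem_preimage]
      rw [hy]
      have : x - (k:ℝ) + (k:ℝ) = x := by ring
      rw [this]
      exact hxA
    have := hW3 (⟨⟨A, hA𝒜⟩, k⟩ : ↥𝒜 × ℤ) hymem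
    obtain ⟨_, ⟨N₀, rfl⟩, hN₀⟩ := this
    have := hD2 (⟨⟨A, hA𝒜⟩, k⟩ : ↥𝒜 × ℤ) N₀ hN₀
    obtain ⟨_, ⟨N, rfl⟩, hN⟩ := this
    refine Set.mem_iUnion.2 ⟨(k, N), ⟨psi y, ⟨y, hN, rfl⟩, ?_⟩⟩
    rw [hy]; ring
  apply IsMeagre.mono hsub
  apply meagre_iUnion_count
  rintro ⟨k, N⟩
  exact nwd_isMeagre (nwd_translate _ (nwd_image (hD1 N)))

theorem addMeager_eq_min' : addMeager = min unboundingNumber covMeager :=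
  le_antisymm (le_min add_le_unbounding add_le_cov) min_le_add

end MT

/-- `add(M) = min {𝔟, cov(M)}`. -/
theorem addMeager_eq_min : addMeager = min unboundingNumber covMeager := by
  exact MT.addMeager_eq_min'
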